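/- Let e ≥ 4 with t_e ≥ 1 and n ≥ b_e be integers, write k = k_e, t = t_e and γ = ρ(D_{n,e}), and let y be an eigenvector of the adjacency matrix of D_{n,e} with eigenvalue γ all of whose entries are positive. Set Y_i = y_i/y_1 for i ∈ {2, k+1, k+2} and Δ = γ(γ+1)(γ-k+t+1) - t(γ(γ+2) - k + t + 1). Then Y_2 = (γ(γ+2) - k + t + 1)/Δ, Y_{k+1} = γ(γ+1)/Δ, and Y_{k+2} = (γ+1)(γ-k+t+1)/Δ. -/

import Mathlib

open Polynomial Matrix

attribute [local instance] Classical.propDecidable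

/-- The spectral radius of a finite simple graph: the largest modulus of a (real)
eigenvalue of its adjacency matrix. -/
noncomputable def specRad {V : Type} [Fintype V] (G : SimpleGraph V) : ℝ :=
  sSup { r : ℝ | ∃ μ : ℝ, (∃ v : V → ℝ, v ≠ 0 ∧ (G.adjMatrix ℝ) *ᵥ v = μ • v) ∧ r = |μ| }

/-- The characteristic polynomial of the adjacency matrix of a graph. -/
noncomputable def gCharPoly {V : Type} [Fintype V] (G : SimpleGraph V) : Polynomial ℝ :=
  Matrix.charpoly (G.adjMatrix ℝ)

/-- `G` is a connected graph with `n` vertices and `n - 1 + e` edges. -/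
def memC (n e : ℕ) (G : SimpleGraph (Fin n)) : Prop :=
  G.Connected ∧ G.edgeSet.ncard = n - 1 + e

/-- `kk e` is the largest natural number `k` with `k * (k - 1) / 2 ≤ e`. -/
def kk (e : ℕ) : ℕ := Nat.findGreatest (fun k => k * (k - 1) ≤ 2 * e) (e + 2)

def tt (e : ℕ) : ℕ := e - kk e * (kk e - 1) / 2

def bb (e : ℕ) : ℕ := if e = 0 then 1 else if tt e = 0 then kk e + 1 else kk e + 2

/-- The graph `V_{n,e} = (K_{1,e} + (n-e-2)K_1) ∨ K_1` (vertices `0`-based: paper vertex `i`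
is `i - 1` here): vertex `0` is adjacent to all other vertices, vertex `1` is additionally
adjacent to vertices `2, …, e+1`, and there are no other edges. -/
def graphV (n e : ℕ) : SimpleGraph (Fin n) :=
  SimpleGraph.fromRel (fun i j => (i : ℕ) = 0 ∨ ((i : ℕ) = 1 ∧ 2 ≤ (j : ℕ) ∧ (j : ℕ) ≤ e + 1))

/-- The graph `D_{n,e}` (vertices `0`-based): vertex `0` is adjacent to all other vertices,
and for `1 ≤ i < j`, vertices `i` and `j` are adjacent iff `j ≤ kk e` or
(`j = kk e + 1` and `i ≤ tt e`).  For `n < kk e + 2` this is the complete graph. -/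
def graphD (n e : ℕ) : SimpleGraph (Fin n) :=
  SimpleGraph.fromRel (fun i j =>
    (i : ℕ) = 0 ∨ (1 ≤ (i : ℕ) ∧ (i : ℕ) < (j : ℕ) ∧
      ((j : ℕ) ≤ kk e ∨ ((j : ℕ) = kk e + 1 ∧ (i : ℕ) ≤ tt e))))

/-- A graph on `Fin n` whose adjacency matrix is stepwise (i.e. a threshold graph whose
vertices are already arranged in the canonical order). -/
def IsStepwise {n : ℕ} (G : SimpleGraph (Fin n)) : Prop :=
  ∀ i j k l : Fin n, G.Adj i j → i < j → k < l → k ≤ i → l ≤ j → G.Adj k l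

/-- The (0-based) index of the last vertex of degree at least 2, i.e. the paper's `s - 1`. -/
noncomputable def sIdx {n : ℕ} (G : SimpleGraph (Fin n)) : ℕ :=
  Nat.findGreatest (fun i => ∃ h : i < n, 2 ≤ (G.neighborSet ⟨i, h⟩).ncard) (n - 1)

/-- The T-subgraph `T(G)`: the subgraph of `G` induced on vertices `1, …, sIdx G`
(paper vertices `2, …, s`). -/
noncomputable def Tgraph {n : ℕ} (G : SimpleGraph (Fin n)) : SimpleGraph (Fin (sIdx G)) :=
  SimpleGraph.comap (fun i => (⟨(i : ℕ) + 1, by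
    have h1 : (i : ℕ) < sIdx G := i.isLt
    have h2 : sIdx G ≤ n - 1 := by unfold sIdx; exact Nat.findGreatest_le _
    omega⟩ : Fin n)) G

/-- The graph `T1(G) = T(G) ∨ K_1`: the subgraph of `G` induced on vertices
`0, 1, …, sIdx G` (paper vertices `1, …, s`). -/
noncomputable def T1graph {n : ℕ} (G : SimpleGraph (Fin n)) : SimpleGraph (Fin (sIdx G + 1)) :=
  if h : 0 < n then
    SimpleGraph.comap (fun i => (⟨(i : ℕ) % n, Nat.mod_lt _ h⟩ : Fin n)) G
  else ⊥

/-- The rational function `R_G(λ) = λ · P_{T1(G)}(λ) / P_{T(G)}(λ)`. -/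
noncomputable def Rfun {n : ℕ} (G : SimpleGraph (Fin n)) : ℝ → ℝ :=
  fun x => x * (gCharPoly (T1graph G)).eval x / (gCharPoly (Tgraph G)).eval x

/-- The polynomial `Q_{G1,G2}`. -/
noncomputable def Qpoly {n : ℕ} (G1 G2 : SimpleGraph (Fin n)) : Polynomial ℝ :=
  X * (gCharPoly (T1graph G1) * gCharPoly (Tgraph G2)
       - gCharPoly (T1graph G2) * gCharPoly (Tgraph G1))
  + C ((sIdx G1 : ℝ) - (sIdx G2 : ℝ)) * (gCharPoly (Tgraph G1) * gCharPoly (Tgraph G2))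

/-- `r` is the largest real root of the polynomial `P`. -/
def IsGreatestRoot (P : Polynomial ℝ) (r : ℝ) : Prop :=
  P.eval r = 0 ∧ ∀ x : ℝ, P.eval x = 0 → x ≤ r

/-- `r` is the largest real zero of the function `f`. -/
def IsGreatestZero (f : ℝ → ℝ) (r : ℝ) : Prop :=
  f r = 0 ∧ ∀ x : ℝ, f x = 0 → x ≤ r

/-- Disjoint union of two simple graphs. -/
def gSum {α β : Type} (G : SimpleGraph α) (H : SimpleGraph β) : SimpleGraph (α ⊕ β) where
  Adj x y := (∃ a b, x = Sum.inl a ∧ y = Sum.inl b ∧ G.Adj a b) ∨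
             (∃ a b, x = Sum.inr a ∧ y = Sum.inr b ∧ H.Adj a b)
  symm := by
    constructor
    rintro x y (⟨a, b, rfl, rfl, hab⟩ | ⟨a, b, rfl, rfl, hab⟩)
    · exact Or.inl ⟨b, a, rfl, rfl, hab.symm⟩
    · exact Or.inr ⟨b, a, rfl, rfl, hab.symm⟩
  loopless := by
    constructor
    rintro x (⟨a, b, rfl, hx, hab⟩ | ⟨a, b, rfl, hx, hab⟩)
    · obtain rfl := Sum.inl.inj hx; exact G.loopless.irrefl a hab
    · obtain rfl := Sum.inr.inj hx; exact H.loopless.irrefl a hab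

/-- Join of two simple graphs: all cross edges are present. -/
def gJoin {α β : Type} (G : SimpleGraph α) (H : SimpleGraph β) : SimpleGraph (α ⊕ β) :=
  (gSum Gᶜ Hᶜ)ᶜ

/-- The polynomial `Ψ_e`. -/
noncomputable def PsiPoly (e : ℕ) : Polynomial ℝ :=
  let k : ℝ := kk e
  let t : ℝ := tt e
  C ((k - 1) * (k - 2) * (k ^ 2 - 3 * k + 4 * t)) * X ^ 3
  - C (k ^ 5 - 6 * k ^ 4 + k ^ 3 * (4 * t + 15) - k ^ 2 * (20 * t + 18)
        + k * (8 * t ^ 2 + 24 * t + 8) - (4 * t ^ 2 + 12 * t)) * X ^ 2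
  - C ((k ^ 2 - k + 2 * t) * (k ^ 3 + k ^ 2 * (t - 4) - k * (3 * t - 5)
        + (4 * t ^ 2 - 2 * t - 2))) * X
  + C (t * (k - t - 1) * (k ^ 2 - 3 * k + 2 * t) * (k ^ 2 - k + 2 * t))


lemma my_sum_ite_eq (n a : ℕ) (f : ℕ → ℝ) (h : a < n) :
    ∑ m ∈ Finset.range n, (if m = a then f m else 0) = f a := by
  rw [← Finset.sum_filter]
  have : (Finset.range n).filter (fun m => m = a) = {a} := by
    ext m; simp [Finset.mem_filter, h]
  rw [this, Finset.sum_singleton]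

lemma my_sum_ite_Ico (n a b : ℕ) (f : ℕ → ℝ) (h : b ≤ n) :
    ∑ m ∈ Finset.range n, (if a ≤ m ∧ m < b then f m else 0) = ∑ m ∈ Finset.Ico a b, f m := by
  rw [← Finset.sum_filter]
  congr 1
  ext m; simp only [Finset.mem_filter, Finset.mem_Ico, Finset.mem_range]; omega

lemma my_sum_const_Ico (a b : ℕ) (f : ℕ → ℝ) (c : ℝ) (h : ∀ m, a ≤ m → m < b → f m = c) :
    ∑ m ∈ Finset.Ico a b, f m = ((b - a : ℕ) : ℝ) * c := by
  rw [Finset.sum_congr rfl (fun m hm => h m (Finset.mem_Ico.mp hm).1 (Finset.mem_Ico.mp hm).2),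
    Finset.sum_const, Nat.card_Ico, nsmul_eq_mul]


def graphD' (n e : ℕ) (k t : ℕ) : SimpleGraph (Fin n) :=
  SimpleGraph.fromRel (fun i j =>
    (i : ℕ) = 0 ∨ (1 ≤ (i : ℕ) ∧ (i : ℕ) < (j : ℕ) ∧
      ((j : ℕ) ≤ k ∨ ((j : ℕ) = k + 1 ∧ (i : ℕ) ≤ t))))

theorem stmt15_core (e n : ℕ) (he : 4 ≤ e) (k t : ℕ) (ht : 1 ≤ t)
    (hk3 : 3 ≤ k) (htk : t + 1 ≤ k) (hn2 : k + 2 ≤ n)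
    (γ : ℝ)
    (y : Fin n → ℝ) (hy : ((graphD' n e k t).adjMatrix ℝ).mulVec y = γ • y)
    (hpos : ∀ i, 0 < y i)
    (Δ : ℝ) (hΔ : Δ = γ * (γ + 1) * (γ - (k : ℝ) + (t : ℝ) + 1)
      - (t : ℝ) * (γ * (γ + 2) - (k : ℝ) + (t : ℝ) + 1)) :
    ∀ v1 v2 vk vk1 : Fin n, (v1 : ℕ) = 0 → (v2 : ℕ) = 1 → (vk : ℕ) = k →
      (vk1 : ℕ) = k + 1 →
      y v2 / y v1 = (γ * (γ + 2) - (k : ℝ) + (t : ℝ) + 1) / Δ ∧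
      y vk / y v1 = γ * (γ + 1) / Δ ∧
      y vk1 / y v1 = (γ + 1) * (γ - (k : ℝ) + (t : ℝ) + 1) / Δ := by
  intro v1 v2 vk vk1 hv1 hv2 hvk hvk1
  have h0n : 0 < n := by omega
  have h1n : 1 < n := by omega
  -- the auxiliary function on ℕ
  obtain ⟨Y, hYval⟩ : ∃ Y : ℕ → ℝ, ∀ (m : ℕ) (h : m < n), Y m = y ⟨m, h⟩ :=
    ⟨fun m => if h : m < n then y ⟨m, h⟩ else 0, fun m h => dif_pos h⟩
  have hYpos : ∀ m : ℕ, m < n → 0 < Y m := fun m h => by rw [hYval m h]; exact hpos _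
  -- adjacency characterization
  have hadj : ∀ i j : Fin n, (graphD' n e k t).Adj i j ↔
      ((i : ℕ) ≠ (j : ℕ) ∧ ((i : ℕ) = 0 ∨ (j : ℕ) = 0 ∨ ((i : ℕ) ≤ k ∧ (j : ℕ) ≤ k) ∨
        ((j : ℕ) = k + 1 ∧ (i : ℕ) ≤ t) ∨ ((i : ℕ) = k + 1 ∧ (j : ℕ) ≤ t))) := by
    intro i j
    simp only [graphD', SimpleGraph.fromRel_adj, ne_eq, ← Fin.val_eq_val]
    constructor
    · rintro ⟨hne, h⟩; exact ⟨hne, by omega⟩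
    · rintro ⟨hne, h⟩; exact ⟨hne, by omega⟩
  -- row equations
  have hrow : ∀ i : Fin n, γ * y i = ∑ m ∈ Finset.range n,
      (if ((i : ℕ) ≠ m ∧ ((i : ℕ) = 0 ∨ m = 0 ∨ ((i : ℕ) ≤ k ∧ m ≤ k) ∨
        (m = k + 1 ∧ (i : ℕ) ≤ t) ∨ ((i : ℕ) = k + 1 ∧ m ≤ t))) then Y m else 0) := by
    intro i
    have h1 := congrFun hy i
    rw [SimpleGraph.adjMatrix_mulVec_apply, SimpleGraph.neighborFinset_eq_filter,
      Finset.sum_filter] at h1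
    simp only [Pi.smul_apply, smul_eq_mul] at h1
    rw [← h1]
    rw [← Fin.sum_univ_eq_sum_range (fun m =>
      (if ((i : ℕ) ≠ m ∧ ((i : ℕ) = 0 ∨ m = 0 ∨ ((i : ℕ) ≤ k ∧ m ≤ k) ∨
        (m = k + 1 ∧ (i : ℕ) ≤ t) ∨ ((i : ℕ) = k + 1 ∧ m ≤ t))) then Y m else 0)) n]
    refine Finset.sum_congr rfl (fun j _ => ?_)
    have hYj : Y (j : ℕ) = y j := by rw [hYval _ j.isLt]
    rw [hYj]
    exact if_congr (hadj i j) rfl rfl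
  -- positivity of γ
  have hγpos : 0 < γ := by
    have h1 : γ * Y 0 = ∑ m ∈ Finset.range n,
        (if ((0 : ℕ) ≠ m ∧ ((0 : ℕ) = 0 ∨ m = 0 ∨ ((0 : ℕ) ≤ k ∧ m ≤ k) ∨
          (m = k + 1 ∧ (0 : ℕ) ≤ t) ∨ ((0 : ℕ) = k + 1 ∧ m ≤ t))) then Y m else 0) := by
      rw [hYval 0 h0n]; exact hrow ⟨0, h0n⟩
    have h2 : (if ((0 : ℕ) ≠ 1 ∧ ((0 : ℕ) = 0 ∨ (1 : ℕ) = 0 ∨ ((0 : ℕ) ≤ k ∧ 1 ≤ k) ∨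
          ((1 : ℕ) = k + 1 ∧ (0 : ℕ) ≤ t) ∨ ((0 : ℕ) = k + 1 ∧ 1 ≤ t))) then Y 1 else 0)
        ≤ ∑ m ∈ Finset.range n,
        (if ((0 : ℕ) ≠ m ∧ ((0 : ℕ) = 0 ∨ m = 0 ∨ ((0 : ℕ) ≤ k ∧ m ≤ k) ∨
          (m = k + 1 ∧ (0 : ℕ) ≤ t) ∨ ((0 : ℕ) = k + 1 ∧ m ≤ t))) then Y m else 0) := by
      refine Finset.single_le_sum (f := fun m => (if ((0 : ℕ) ≠ m ∧ ((0 : ℕ) = 0 ∨ m = 0 ∨ ((0 : ℕ) ≤ k ∧ m ≤ k) ∨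
          (m = k + 1 ∧ (0 : ℕ) ≤ t) ∨ ((0 : ℕ) = k + 1 ∧ m ≤ t))) then Y m else 0))
        (fun m hm => ?_) (Finset.mem_range.mpr h1n)
      rw [Finset.mem_range] at hm
      by_cases hc : ((0 : ℕ) ≠ m ∧ ((0 : ℕ) = 0 ∨ m = 0 ∨ ((0 : ℕ) ≤ k ∧ m ≤ k) ∨
          (m = k + 1 ∧ (0 : ℕ) ≤ t) ∨ ((0 : ℕ) = k + 1 ∧ m ≤ t)))
      · rw [if_pos hc]; exact le_of_lt (hYpos m hm)
      · rw [if_neg hc]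
    rw [if_pos (by omega)] at h2
    have h3 : 0 < γ * Y 0 := lt_of_lt_of_le (hYpos 1 h1n) (h1 ▸ h2)
    by_contra hc
    push_neg at hc
    have : γ * Y 0 ≤ 0 := mul_nonpos_of_nonpos_of_nonneg hc (le_of_lt (hYpos 0 h0n))
    linarith
  -- swap argument: Y constant on the two classes
  have hswap : ∀ a b : ℕ, a < n → b < n →
      ((1 ≤ a ∧ a ≤ t ∧ 1 ≤ b ∧ b ≤ t) ∨ (t + 1 ≤ a ∧ a ≤ k ∧ t + 1 ≤ b ∧ b ≤ k)) →
      Y a = Y b := by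
    intro a b han hbn hcl
    rcases eq_or_ne a b with rfl | hab
    · rfl
    have h1 : γ * Y a = ∑ m ∈ Finset.range n,
        (if (a ≠ m ∧ (a = 0 ∨ m = 0 ∨ (a ≤ k ∧ m ≤ k) ∨
          (m = k + 1 ∧ a ≤ t) ∨ (a = k + 1 ∧ m ≤ t))) then Y m else 0) := by
      rw [hYval a han]; exact hrow ⟨a, han⟩
    have h2 : γ * Y b = ∑ m ∈ Finset.range n,
        (if (b ≠ m ∧ (b = 0 ∨ m = 0 ∨ (b ≤ k ∧ m ≤ k) ∨
          (m = k + 1 ∧ b ≤ t) ∨ (b = k + 1 ∧ m ≤ t))) then Y m else 0) := by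
      rw [hYval b hbn]; exact hrow ⟨b, hbn⟩
    have key : γ * Y a - γ * Y b = Y b - Y a := by
      rw [h1, h2, ← Finset.sum_sub_distrib]
      have hpt : ∀ m ∈ Finset.range n,
          ((if (a ≠ m ∧ (a = 0 ∨ m = 0 ∨ (a ≤ k ∧ m ≤ k) ∨
            (m = k + 1 ∧ a ≤ t) ∨ (a = k + 1 ∧ m ≤ t))) then Y m else 0)
          - (if (b ≠ m ∧ (b = 0 ∨ m = 0 ∨ (b ≤ k ∧ m ≤ k) ∨
            (m = k + 1 ∧ b ≤ t) ∨ (b = k + 1 ∧ m ≤ t))) then Y m else 0))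
          = (if m = b then Y m else 0) - (if m = a then Y m else 0) := by
        intro m hm
        split_ifs <;> first | ring1 | (exfalso; omega)
      rw [Finset.sum_congr rfl hpt, Finset.sum_sub_distrib,
        my_sum_ite_eq n b Y hbn, my_sum_ite_eq n a Y han]
    have h4 : (γ + 1) * (Y a - Y b) = 0 := by linear_combination key
    rcases mul_eq_zero.mp h4 with h5 | h5
    · exfalso; linarith
    · linarith [sub_eq_zero.mp h5]
  have hc1 : ∀ m, 1 ≤ m → m ≤ t → Y m = Y 1 :=
    fun m h1 h2 => hswap m 1 (by omega) (by omega) (by omega)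
  have hc2 : ∀ m, t + 1 ≤ m → m ≤ k → Y m = Y k :=
    fun m h1 h2 => hswap m k (by omega) (by omega) (by omega)
  -- the three row equations in interval-sum form
  have hrow1 : γ * Y 1 = Y 0 + (∑ m ∈ Finset.Ico 2 (k + 1), Y m) + Y (k + 1) := by
    have h1 : γ * Y 1 = ∑ m ∈ Finset.range n,
        (if ((1 : ℕ) ≠ m ∧ ((1 : ℕ) = 0 ∨ m = 0 ∨ ((1 : ℕ) ≤ k ∧ m ≤ k) ∨
          (m = k + 1 ∧ (1 : ℕ) ≤ t) ∨ ((1 : ℕ) = k + 1 ∧ m ≤ t))) then Y m else 0) := by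
      rw [hYval 1 h1n]; exact hrow ⟨1, h1n⟩
    have hsplit : ∀ m ∈ Finset.range n,
        (if ((1 : ℕ) ≠ m ∧ ((1 : ℕ) = 0 ∨ m = 0 ∨ ((1 : ℕ) ≤ k ∧ m ≤ k) ∨
          (m = k + 1 ∧ (1 : ℕ) ≤ t) ∨ ((1 : ℕ) = k + 1 ∧ m ≤ t))) then Y m else 0)
        = ((if m = 0 then Y m else 0) + (if 2 ≤ m ∧ m < k + 1 then Y m else 0))
          + (if m = k + 1 then Y m else 0) := by
      intro m hm
      rw [if_congr (show ((1 : ℕ) ≠ m ∧ ((1 : ℕ) = 0 ∨ m = 0 ∨ ((1 : ℕ) ≤ k ∧ m ≤ k) ∨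
          (m = k + 1 ∧ (1 : ℕ) ≤ t) ∨ ((1 : ℕ) = k + 1 ∧ m ≤ t))) ↔
          (m = 0 ∨ (2 ≤ m ∧ m < k + 1) ∨ m = k + 1) by omega) rfl rfl]
      split_ifs <;> first | ring1 | (exfalso; omega)
    rw [h1, Finset.sum_congr rfl hsplit, Finset.sum_add_distrib, Finset.sum_add_distrib,
      my_sum_ite_eq n 0 Y h0n, my_sum_ite_Ico n 2 (k + 1) Y (by omega),
      my_sum_ite_eq n (k + 1) Y (by omega)]
  have hrowk : γ * Y k = Y 0 + ∑ m ∈ Finset.Ico 1 k, Y m := by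
    have h1 : γ * Y k = ∑ m ∈ Finset.range n,
        (if (k ≠ m ∧ (k = 0 ∨ m = 0 ∨ (k ≤ k ∧ m ≤ k) ∨
          (m = k + 1 ∧ k ≤ t) ∨ (k = k + 1 ∧ m ≤ t))) then Y m else 0) := by
      rw [hYval k (by omega)]; exact hrow ⟨k, by omega⟩
    have hsplit : ∀ m ∈ Finset.range n,
        (if (k ≠ m ∧ (k = 0 ∨ m = 0 ∨ (k ≤ k ∧ m ≤ k) ∨
          (m = k + 1 ∧ k ≤ t) ∨ (k = k + 1 ∧ m ≤ t))) then Y m else 0)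
        = (if m = 0 then Y m else 0) + (if 1 ≤ m ∧ m < k then Y m else 0) := by
      intro m hm
      rw [if_congr (show (k ≠ m ∧ (k = 0 ∨ m = 0 ∨ (k ≤ k ∧ m ≤ k) ∨
          (m = k + 1 ∧ k ≤ t) ∨ (k = k + 1 ∧ m ≤ t))) ↔
          (m = 0 ∨ (1 ≤ m ∧ m < k)) by omega) rfl rfl]
      split_ifs <;> first | ring1 | (exfalso; omega)
    rw [h1, Finset.sum_congr rfl hsplit, Finset.sum_add_distrib,
      my_sum_ite_eq n 0 Y h0n, my_sum_ite_Ico n 1 k Y (by omega)]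
  have hrowk1 : γ * Y (k + 1) = Y 0 + ∑ m ∈ Finset.Ico 1 (t + 1), Y m := by
    have h1 : γ * Y (k + 1) = ∑ m ∈ Finset.range n,
        (if (k + 1 ≠ m ∧ (k + 1 = 0 ∨ m = 0 ∨ (k + 1 ≤ k ∧ m ≤ k) ∨
          (m = k + 1 ∧ k + 1 ≤ t) ∨ (k + 1 = k + 1 ∧ m ≤ t))) then Y m else 0) := by
      rw [hYval (k + 1) (by omega)]; exact hrow ⟨k + 1, by omega⟩
    have hsplit : ∀ m ∈ Finset.range n,
        (if (k + 1 ≠ m ∧ (k + 1 = 0 ∨ m = 0 ∨ (k + 1 ≤ k ∧ m ≤ k) ∨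
          (m = k + 1 ∧ k + 1 ≤ t) ∨ (k + 1 = k + 1 ∧ m ≤ t))) then Y m else 0)
        = (if m = 0 then Y m else 0) + (if 1 ≤ m ∧ m < t + 1 then Y m else 0) := by
      intro m hm
      rw [if_congr (show (k + 1 ≠ m ∧ (k + 1 = 0 ∨ m = 0 ∨ (k + 1 ≤ k ∧ m ≤ k) ∨
          (m = k + 1 ∧ k + 1 ≤ t) ∨ (k + 1 = k + 1 ∧ m ≤ t))) ↔
          (m = 0 ∨ (1 ≤ m ∧ m < t + 1)) by omega) rfl rfl]
      split_ifs <;> first | ring1 | (exfalso; omega)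
    rw [h1, Finset.sum_congr rfl hsplit, Finset.sum_add_distrib,
      my_sum_ite_eq n 0 Y h0n, my_sum_ite_Ico n 1 (t + 1) Y (by omega)]
  -- evaluate the interval sums
  have hS1 : ∑ m ∈ Finset.Ico 1 (t + 1), Y m = (t : ℝ) * Y 1 := by
    rw [my_sum_const_Ico 1 (t + 1) Y (Y 1) (fun m h1 h2 => hc1 m h1 (by omega))]
    norm_num
  have hS2 : ∑ m ∈ Finset.Ico 2 (k + 1), Y m
      = ((t : ℝ) - 1) * Y 1 + ((k : ℝ) - (t : ℝ)) * Y k := by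
    rw [← Finset.sum_Ico_consecutive Y (show 2 ≤ t + 1 by omega) (show t + 1 ≤ k + 1 by omega),
      my_sum_const_Ico 2 (t + 1) Y (Y 1) (fun m h1 h2 => hc1 m (by omega) (by omega)),
      my_sum_const_Ico (t + 1) (k + 1) Y (Y k) (fun m h1 h2 => hc2 m h1 (by omega))]
    have e1 : ((t + 1 - 2 : ℕ) : ℝ) = (t : ℝ) - 1 := by
      have h : t + 1 - 2 = t - 1 := by omega
      rw [h, Nat.cast_sub ht, Nat.cast_one]
    have e2 : ((k + 1 - (t + 1) : ℕ) : ℝ) = (k : ℝ) - (t : ℝ) := by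
      have h : k + 1 - (t + 1) = k - t := by omega
      rw [h, Nat.cast_sub (by omega)]
    rw [e1, e2]
  have hS3 : ∑ m ∈ Finset.Ico 1 k, Y m
      = (t : ℝ) * Y 1 + ((k : ℝ) - (t : ℝ) - 1) * Y k := by
    rw [← Finset.sum_Ico_consecutive Y (show 1 ≤ t + 1 by omega) (show t + 1 ≤ k by omega),
      my_sum_const_Ico 1 (t + 1) Y (Y 1) (fun m h1 h2 => hc1 m h1 (by omega)),
      my_sum_const_Ico (t + 1) k Y (Y k) (fun m h1 h2 => hc2 m h1 (by omega))]
    have e1 : ((t + 1 - 1 : ℕ) : ℝ) = (t : ℝ) := by norm_num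
    have e2 : ((k - (t + 1) : ℕ) : ℝ) = (k : ℝ) - (t : ℝ) - 1 := by
      rw [Nat.cast_sub (by omega)]; push_cast; ring
    rw [e1, e2]
  -- name the four values
  set a := Y 0 with hadef
  set p := Y 1 with hpdef
  set q := Y k with hqdef
  set r := Y (k + 1) with hrdef
  have hap : 0 < a := hYpos 0 h0n
  have hpp : 0 < p := hYpos 1 h1n
  have hqp : 0 < q := hYpos k (by omega)
  have hrp : 0 < r := hYpos (k + 1) (by omega)
  have E1 : γ * p = a + (((t : ℝ) - 1) * p + ((k : ℝ) - (t : ℝ)) * q) + r := by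
    rw [hrow1, hS2]
  have E2 : γ * q = a + ((t : ℝ) * p + ((k : ℝ) - (t : ℝ) - 1) * q) := by
    rw [hrowk, hS3]
  have E3 : γ * r = a + (t : ℝ) * p := by rw [hrowk1, hS1]
  have htR : (1 : ℝ) ≤ (t : ℝ) := by exact_mod_cast ht
  -- m > 0
  have hE2' : (γ - (k : ℝ) + (t : ℝ) + 1) * q = a + (t : ℝ) * p := by linear_combination E2
  have hmpos : 0 < γ - (k : ℝ) + (t : ℝ) + 1 := by
    have h1 : 0 < a + (t : ℝ) * p := by
      have h0 : (0 : ℝ) ≤ (t : ℝ) * p := mul_nonneg (Nat.cast_nonneg t) (le_of_lt hpp)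
      linarith
    have h2 : 0 < (γ - (k : ℝ) + (t : ℝ) + 1) * q := by rw [hE2']; exact h1
    rcases mul_pos_iff.mp h2 with ⟨h, _⟩ | ⟨_, h⟩
    · exact h
    · linarith
  -- key identities
  have key1 : Δ * p = a * (γ * (γ + 2) - (k : ℝ) + (t : ℝ) + 1) := by
    linear_combination (γ * (γ - (k : ℝ) + (t : ℝ) + 1)) * E1
      + (γ * ((k : ℝ) - (t : ℝ))) * hE2' + (γ - (k : ℝ) + (t : ℝ) + 1) * E3 + p * hΔ
  have hXpos : 0 < γ * (γ + 2) - (k : ℝ) + (t : ℝ) + 1 := by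
    have h0 : 0 < γ * γ := mul_pos hγpos hγpos
    have h1 : γ * (γ + 2) - (k : ℝ) + (t : ℝ) + 1
        = γ * γ + γ + (γ - (k : ℝ) + (t : ℝ) + 1) := by ring
    rw [h1]; have := hmpos; linarith
  have hΔpos : 0 < Δ := by
    have h1 : 0 < Δ * p := by rw [key1]; exact mul_pos hap hXpos
    rcases mul_pos_iff.mp h1 with ⟨h, _⟩ | ⟨_, h⟩
    · exact h
    · linarith
  have key2 : Δ * q = a * (γ * (γ + 1)) := by
    have h1 : (γ - (k : ℝ) + (t : ℝ) + 1) * (Δ * q)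
        = (γ - (k : ℝ) + (t : ℝ) + 1) * (a * (γ * (γ + 1))) := by
      linear_combination Δ * hE2' + (t : ℝ) * key1 + a * hΔ
    exact mul_left_cancel₀ (ne_of_gt hmpos) h1
  have key3 : Δ * r = a * ((γ + 1) * (γ - (k : ℝ) + (t : ℝ) + 1)) := by
    have h1 : γ * (Δ * r) = γ * (a * ((γ + 1) * (γ - (k : ℝ) + (t : ℝ) + 1))) := by
      linear_combination Δ * E3 + (t : ℝ) * key1 + a * hΔ
    exact mul_left_cancel₀ (ne_of_gt hγpos) h1
  -- rewrite goal vertices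
  have hv1y : y v1 = a := by
    rw [hadef, hYval 0 h0n]; exact congrArg y (Fin.ext (by simp [hv1]))
  have hv2y : y v2 = p := by
    rw [hpdef, hYval 1 h1n]; exact congrArg y (Fin.ext (by simp [hv2]))
  have hvky : y vk = q := by
    rw [hqdef, hYval k (by omega)]; exact congrArg y (Fin.ext (by simp [hvk]))
  have hvk1y : y vk1 = r := by
    rw [hrdef, hYval (k + 1) (by omega)]; exact congrArg y (Fin.ext (by simp [hvk1]))
  refine ⟨?_, ?_, ?_⟩
  · rw [hv2y, hv1y, div_eq_div_iff (ne_of_gt hap) (ne_of_gt hΔpos)]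
    linear_combination key1
  · rw [hvky, hv1y, div_eq_div_iff (ne_of_gt hap) (ne_of_gt hΔpos)]
    linear_combination key2
  · rw [hvk1y, hv1y, div_eq_div_iff (ne_of_gt hap) (ne_of_gt hΔpos)]
    linear_combination key3

lemma kk_facts (e : ℕ) (he : 4 ≤ e) (ht : 1 ≤ tt e) : 3 ≤ kk e ∧ tt e + 1 ≤ kk e := by
  have h3 : 3 ≤ kk e := Nat.le_findGreatest (by omega) (by omega)
  have hspec : kk e * (kk e - 1) ≤ 2 * e :=
    Nat.findGreatest_spec (m := 3) (P := fun k => k * (k - 1) ≤ 2 * e) (by omega) (by omega)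
  have hle : kk e ≤ e + 2 := Nat.findGreatest_le (e + 2)
  have hne : kk e ≠ e + 2 := by
    intro hc
    rw [hc] at hspec
    have h4 : e + 2 - 1 = e + 1 := by omega
    rw [h4] at hspec
    nlinarith
  have hgr : ¬((kk e + 1) * (kk e + 1 - 1) ≤ 2 * e) := by
    apply Nat.findGreatest_is_greatest (P := fun k => k * (k - 1) ≤ 2 * e) (n := e + 2) (k := kk e + 1)
    · exact Nat.lt_succ_self _
    · omega
  obtain ⟨c, hc⟩ : ∃ c, kk e * (kk e - 1) = c + c := by
    have h4 : kk e - 1 + 1 = kk e := by omega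
    have h5 : Even ((kk e - 1) * (kk e - 1 + 1)) := Nat.even_mul_succ_self _
    rw [h4] at h5
    obtain ⟨c, hc⟩ := h5
    exact ⟨c, by rw [Nat.mul_comm]; exact hc⟩
  have htt : tt e = e - c := by unfold tt; omega
  have h6 : (kk e + 1) * (kk e + 1 - 1) = kk e * (kk e - 1) + 2 * kk e := by
    obtain ⟨k', hk'⟩ : ∃ k', kk e = k' + 1 := ⟨kk e - 1, by omega⟩
    rw [hk']
    simp [Nat.add_sub_cancel]
    ring
  rw [h6] at hgr
  exact ⟨h3, by omega⟩

lemma bb_eq (e : ℕ) (he : 4 ≤ e) (ht : 1 ≤ tt e) : bb e = kk e + 2 := by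
  unfold bb
  rw [if_neg (by omega), if_neg (by omega)]

theorem stmt_15 (e n : ℕ) (he : 4 ≤ e) (ht : 1 ≤ tt e) (hn : bb e ≤ n)
    (γ : ℝ) (hγ : γ = specRad (graphD n e))
    (y : Fin n → ℝ) (hy : ((graphD n e).adjMatrix ℝ).mulVec y = γ • y)
    (hpos : ∀ i, 0 < y i)
    (Δ : ℝ) (hΔ : Δ = γ * (γ + 1) * (γ - (kk e : ℝ) + (tt e : ℝ) + 1)
      - (tt e : ℝ) * (γ * (γ + 2) - (kk e : ℝ) + (tt e : ℝ) + 1)) :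
    ∀ v1 v2 vk vk1 : Fin n, (v1 : ℕ) = 0 → (v2 : ℕ) = 1 → (vk : ℕ) = kk e →
      (vk1 : ℕ) = kk e + 1 →
      y v2 / y v1 = (γ * (γ + 2) - (kk e : ℝ) + (tt e : ℝ) + 1) / Δ ∧
      y vk / y v1 = γ * (γ + 1) / Δ ∧
      y vk1 / y v1 = (γ + 1) * (γ - (kk e : ℝ) + (tt e : ℝ) + 1) / Δ := by
  obtain ⟨hk3, htk⟩ := kk_facts e he ht
  have hn2 : kk e + 2 ≤ n := by rw [bb_eq e he ht] at hn; exact hn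
  exact stmt15_core e n he (kk e) (tt e) ht hk3 htk hn2 γ y hy hpos Δ hΔ
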